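/- Let Σ be an alphabet, u1, u2 ∈ Σ* with |u1| ≥ |u2|, and w1, w2 ∈ Σ* nonempty words. Let d = |u1| − |u2|, t = gcd(|w1|,|w2|), s = d mod |w2|, and let w be the prefix of w1 of length t. Then the infinite sequences u1·w1^ω and u2·w2^ω are equal if and only if all three of the following hold: (i) u1 equals the prefix of length |u1| of the sequence u2·w2^ω; (ii) w1 = w^{|w1|/t}; (iii) the cyclic shift w2[s..|w2|)·w2[0..s) equals w^{|w2|/t}. -/

import Mathlib

/-- The infinite sequence `u · w^ω` (as an `Option`-valued function on
positions; all values are `some` as soon as `w` is nonempty). -/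
def seqOf {α : Type} (u w : List α) (i : ℕ) : Option α :=
  if i < u.length then u[i]? else w[(i - u.length) % w.length]?

section Aux
variable {α : Type}

lemma flatten_rep_get (w : List α) (m j : ℕ) :
    (List.replicate m w).flatten[j]? = if j < m * w.length then w[j % w.length]? else none := by
  induction m generalizing j with
  | zero => simp
  | succ m ih =>
    rw [List.replicate_succ, List.flatten_cons, List.getElem?_append, ih]
    rcases lt_or_ge j w.length with h | h
    · rw [if_pos h, Nat.mod_eq_of_lt h, if_pos]
      calc j < w.length := h
        _ ≤ (m+1) * w.length := Nat.le_mul_of_pos_left _ (Nat.succ_pos m)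
    · rw [if_neg (not_lt.2 h)]
      have h1 : (j - w.length) % w.length = j % w.length := by
        conv_rhs => rw [← Nat.sub_add_cancel h, Nat.add_mod_right]
      have h2 : (j - w.length < m * w.length) = (j < (m+1) * w.length) := by
        simp only [eq_iff_iff, Nat.succ_mul]; omega
      rw [h1]
      exact if_congr (iff_of_eq h2) rfl rfl

/-- periods p and q imply period gcd p q for functions on ℕ -/
lemma period_gcd {β : Type*} (f : ℕ → β) (p q : ℕ) (hp : 0 < p) (hq : 0 < q)
    (Hp : ∀ j, f (j + p) = f j) (Hq : ∀ j, f (j + q) = f j) :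
    ∀ j, f (j + Nat.gcd p q) = f j := by
  have mulp : ∀ k j, f (j + k * p) = f j := by
    intro k
    induction k with
    | zero => simp
    | succ k ih => intro j; rw [Nat.succ_mul, ← Nat.add_assoc, Hp, ih]
  have mulq : ∀ k j, f (j + k * q) = f j := by
    intro k
    induction k with
    | zero => simp
    | succ k ih => intro j; rw [Nat.succ_mul, ← Nat.add_assoc, Hq, ih]
  rcases eq_or_lt_of_le (Nat.gcd_le_right (n := q) p hq) with hE | hL
  · intro j; rw [hE]; exact Hq j
  · obtain ⟨m, -, hm⟩ := Nat.exists_mul_mod_eq_gcd (k := q) (n := p) hL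
    intro j
    have hdiv : p * m = q * (p * m / q) + Nat.gcd p q := by
      conv_lhs => rw [← Nat.div_add_mod (p * m) q, hm]
    have e1 : f (j + Nat.gcd p q) = f (j + Nat.gcd p q + (p * m / q) * q) := (mulq _ _).symm
    have e2 : j + Nat.gcd p q + (p * m / q) * q = j + m * p := by
      rw [Nat.mul_comm m p, Nat.mul_comm (p * m / q) q]; omega
    rw [e1, e2, mulp]

lemma period_mod {β : Type*} (f : ℕ → β) (t : ℕ) (ht : 0 < t)
    (H : ∀ j, f (j + t) = f j) : ∀ j, f j = f (j % t) := by
  intro j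
  conv_lhs => rw [← Nat.div_add_mod j t]
  generalize j / t = k
  induction k with
  | zero => simp
  | succ k ih =>
    rw [Nat.mul_succ]
    have : t * k + t + j % t = (t * k + j % t) + t := by ring
    rw [this, H, ih]
end Aux

theorem eventually_periodic_eq_iff {α : Type} (u1 u2 w1 w2 : List α)
    (hlen : u2.length ≤ u1.length) (hw1 : w1 ≠ []) (hw2 : w2 ≠ []) :
    (∀ i : ℕ, seqOf u1 w1 i = seqOf u2 w2 i) ↔
      ((∀ i : ℕ, i < u1.length → u1[i]? = seqOf u2 w2 i) ∧
        w1 = (List.replicate (w1.length / Nat.gcd w1.length w2.length)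
          (w1.take (Nat.gcd w1.length w2.length))).flatten ∧
        w2.drop ((u1.length - u2.length) % w2.length) ++
            w2.take ((u1.length - u2.length) % w2.length) =
          (List.replicate (w2.length / Nat.gcd w1.length w2.length)
            (w1.take (Nat.gcd w1.length w2.length))).flatten) := by
  set n1 := u1.length
  set n2 := u2.length
  set p := w1.length with hp'
  set q := w2.length with hq'
  have hp : 0 < p := List.length_pos_iff.mpr hw1
  have hq : 0 < q := List.length_pos_iff.mpr hw2
  set t := Nat.gcd p q with ht'
  have ht : 0 < t := Nat.gcd_pos_of_pos_left q hp
  have htp : t ∣ p := Nat.gcd_dvd_left p q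
  have htq : t ∣ q := Nat.gcd_dvd_right p q
  have htle : t ≤ p := Nat.le_of_dvd hp htp
  set d := n1 - n2 with hd'
  set s := d % q with hs'
  set w := w1.take t with hw'
  have hwt : w.length = t := by simp [hw', htle]; exact htle
  have hsq : s < q := Nat.mod_lt _ hq
  -- cyclic-shift elements
  have hcyc : ∀ j, j < q → (w2.drop s ++ w2.take s)[j]? = w2[(s + j) % q]? := by
    intro j hj
    rw [List.getElem?_append, List.length_drop]
    rcases lt_or_ge j (q - s) with hc | hc
    · rw [if_pos hc, List.getElem?_drop]
      congr 1
      rw [Nat.mod_eq_of_lt (by omega)]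
    · rw [if_neg (not_lt.2 hc), List.getElem?_take_of_lt (by omega)]
      congr 1
      have : s + j = (j - (q - s)) + q := by omega
      rw [this, Nat.add_mod_right, Nat.mod_eq_of_lt (by omega)]
  have e3 : ∀ j : ℕ, (s + j) % q = (j + d) % q := by
    intro j
    rw [Nat.add_comm s j]
    exact Nat.add_mod_mod j d q
  constructor
  · intro H
    have key : ∀ j : ℕ, w1[j % p]? = w2[(j + d) % q]? := by
      intro j
      have := H (j + n1)
      simp only [seqOf] at this
      rw [if_neg (by omega), if_neg (by omega)] at this
      have e1 : j + n1 - n1 = j := by omega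
      have e2 : j + n1 - n2 = j + d := by omega
      rwa [e1, e2] at this
    set f : ℕ → Option α := fun j => w1[j % p]? with hf'
    have fper_p : ∀ j, f (j + p) = f j := by intro j; simp [hf', Nat.add_mod_right]
    have fper_q : ∀ j, f (j + q) = f j := by
      intro j
      show w1[(j + q) % p]? = w1[j % p]?
      rw [key, key]
      congr 1
      have : j + q + d = (j + d) + q := by ring
      rw [this, Nat.add_mod_right]
    have fper_t : ∀ j, f (j + t) = f j := period_gcd f p q hp hq fper_p fper_q
    have fmod : ∀ j, f j = f (j % t) := period_mod f t ht fper_t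
    have w1per : ∀ j, j < p → w1[j]? = w1[j % t]? := by
      intro j hj
      have := fmod j
      simp only [hf'] at this
      rw [Nat.mod_eq_of_lt hj] at this
      rw [this, Nat.mod_eq_of_lt (lt_of_lt_of_le (Nat.mod_lt j ht) htle)]
    have hwj : ∀ j, w[j]? = if j < t then w1[j]? else none := by
      intro j
      rcases lt_or_ge j t with hj | hj
      · rw [if_pos hj, hw', List.getElem?_take_of_lt hj]
      · rw [if_neg (not_lt.2 hj), List.getElem?_eq_none (by omega)]
    refine ⟨?_, ?_, ?_⟩
    · intro i hi
      have := H i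
      simp only [seqOf] at this
      rwa [if_pos hi] at this
    · apply List.ext_getElem?
      intro j
      rw [flatten_rep_get]
      rw [hwt, Nat.div_mul_cancel htp]
      rcases lt_or_ge j p with hj | hj
      · rw [if_pos hj, hwj, if_pos (Nat.mod_lt j ht)]
        exact w1per j hj
      · rw [if_neg (not_lt.2 hj), List.getElem?_eq_none (by omega)]
    · apply List.ext_getElem?
      intro j
      rw [flatten_rep_get]
      rw [hwt, Nat.div_mul_cancel htq]
      rcases lt_or_ge j q with hj | hj
      · rw [if_pos hj, hcyc j hj, e3, ← key,
          w1per _ (Nat.mod_lt _ hp), Nat.mod_mod_of_dvd j htp,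
          hwj, if_pos (Nat.mod_lt _ ht)]
      · rw [if_neg (not_lt.2 hj), List.getElem?_eq_none]
        simp only [List.length_append, List.length_drop, List.length_take]
        omega
  · rintro ⟨h1, h2, h3⟩ i
    simp only [seqOf]
    rcases lt_or_ge i n1 with hi | hi
    · rw [if_pos hi]
      exact h1 i hi
    · rw [if_neg (by omega), if_neg (by omega)]
      set j := i - n1 with hj'
      have e2 : i - n2 = j + d := by omega
      rw [e2]
      have hget1 : ∀ k, w1[k]? = if k < p then w[k % t]? else none := by
        intro k
        conv_lhs => rw [h2]
        rw [flatten_rep_get, hwt, Nat.div_mul_cancel htp]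
      have hget2 : ∀ k, k < q → w2[(s + k) % q]? = w[k % t]? := by
        intro k hk
        rw [← hcyc k hk, h3, flatten_rep_get, hwt, Nat.div_mul_cancel htq, if_pos hk]
      rw [hget1, if_pos (Nat.mod_lt _ hp), Nat.mod_mod_of_dvd j htp]
      have hkey : (j + d) % q = (s + j % q) % q := by
        rw [e3 (j % q), Nat.mod_add_mod]
      rw [hkey, hget2 _ (Nat.mod_lt _ hq), Nat.mod_mod_of_dvd j htq]
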